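/- arXiv:2202.01848 — 2 statements merged into one kernel-verified Lean document; each statement's English description precedes it below -/
import Mathlib

section
/- Let T be a real random variable whose law μ has a density f with respect to Lebesgue measure on ℝ, and define the maximum-specificity plausibility contour π(t) := μ{s ∈ ℝ : f(s) ≤ f(t)}. Then for every α ∈ (0,1), μ{t ∈ ℝ : π(t) ≤ α} ≤ α; that is, π(T) is stochastically no smaller than a uniform random variable on [0,1]. -/
open MeasureTheory ProbabilityTheory

/-- For any nonempty set `A ⊆ ℝ` and any function `f`, there is a sequence in `A`
whose `f`-values are cofinal in `f '' A`. -/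
lemma exists_cofinal_seq (f : ℝ → ℝ) (A : Set ℝ) (hA : A.Nonempty) :
    ∃ v : ℕ → ℝ, (∀ n, v n ∈ A) ∧ ∀ t ∈ A, ∃ n, f t ≤ f (v n) := by
  by_cases hmax : ∃ m ∈ A, ∀ t ∈ A, f t ≤ f m
  · obtain ⟨m, hm, hmx⟩ := hmax
    exact ⟨fun _ => m, fun _ => hm, fun t ht => ⟨0, hmx t ht⟩⟩
  push_neg at hmax
  by_cases hbdd : BddAbove (f '' A)
  · set c : ℝ := sSup (f '' A) with hc
    have hSne : (f '' A).Nonempty := hA.image f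
    have hlt : ∀ t ∈ A, f t < c := by
      intro t ht
      rcases lt_or_eq_of_le (le_csSup hbdd ⟨t, ht, rfl⟩) with h | h
      · exact h
      · exfalso
        obtain ⟨u, hu, hlt'⟩ := hmax t ht
        exact absurd (le_csSup hbdd ⟨u, hu, rfl⟩) (by rw [← hc] at h ⊢; linarith)
    have hch : ∀ n : ℕ, ∃ t ∈ A, c - 1 / (n + 1) < f t := by
      intro n
      have : c - 1 / (n + 1) < c := by
        have : (0 : ℝ) < 1 / (n + 1) := by positivity
        linarith
      obtain ⟨y, ⟨t, ht, rfl⟩, hy⟩ := exists_lt_of_lt_csSup hSne this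
      exact ⟨t, ht, hy⟩
    choose v hv hv2 using hch
    refine ⟨v, hv, fun t ht => ?_⟩
    obtain ⟨n, hn⟩ := exists_nat_one_div_lt (sub_pos.mpr (hlt t ht))
    exact ⟨n, le_of_lt (by have := hv2 n; linarith)⟩
  · have hch : ∀ n : ℕ, ∃ t ∈ A, (n : ℝ) < f t := by
      intro n
      rcases not_bddAbove_iff.mp hbdd (n : ℝ) with ⟨y, ⟨t, ht, rfl⟩, hy⟩
      exact ⟨t, ht, hy⟩
    choose v hv hv2 using hch
    refine ⟨v, hv, fun t ht => ?_⟩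
    obtain ⟨n, hn⟩ := exists_nat_ge (f t)
    exact ⟨n, le_of_lt (lt_of_le_of_lt hn (hv2 n))⟩

/-- Validity of the maximum-specificity plausibility contour: if `μ` is the law of `T`
with density `f` w.r.t. Lebesgue measure, and `π(t) := μ{s | f(s) ≤ f(t)}`, then
`μ{t | π(t) ≤ α} ≤ α` for all `α ∈ (0,1)`. -/
theorem stmt2 (μ : Measure ℝ) [IsProbabilityMeasure μ]
    (f : ℝ → ℝ) (hf : Measurable f) (hf0 : ∀ x, 0 ≤ f x)
    (hμ : μ = volume.withDensity (fun x => ENNReal.ofReal (f x)))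
    (π : ℝ → ℝ) (hπ : ∀ t, π t = (μ {s | f s ≤ f t}).toReal) :
    ∀ α : ℝ, α ∈ Set.Ioo (0 : ℝ) 1 →
      μ {t | π t ≤ α} ≤ ENNReal.ofReal α := by
  intro α hα
  set B : ℝ → Set ℝ := fun t => {s | f s ≤ f t} with hB
  set A : Set ℝ := {t | π t ≤ α} with hA
  have hBa : ∀ t ∈ A, μ (B t) ≤ ENNReal.ofReal α := by
    intro t ht
    have h1 : (μ (B t)).toReal ≤ α := by rw [← hπ t]; exact ht
    exact (ENNReal.le_ofReal_iff_toReal_le (measure_ne_top μ _) hα.1.le).mpr h1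
  rcases A.eq_empty_or_nonempty with hAe | hAne
  · rw [hAe]; simp
  obtain ⟨v, hv, hcof⟩ := exists_cofinal_seq f A hAne
  have hdir : Directed (· ⊆ ·) fun n => B (v n) := by
    intro i j
    rcases le_total (f (v i)) (f (v j)) with h | h
    · exact ⟨j, fun s hs => le_trans hs h, fun s hs => hs⟩
    · exact ⟨i, fun s hs => hs, fun s hs => le_trans hs h⟩
  have hsub : A ⊆ ⋃ n, B (v n) := by
    intro t ht
    obtain ⟨n, hn⟩ := hcof t ht
    exact Set.mem_iUnion.mpr ⟨n, hn⟩
  calc μ A ≤ μ (⋃ n, B (v n)) := measure_mono hsub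
    _ = ⨆ n, μ (B (v n)) := hdir.measure_iUnion
    _ ≤ ENNReal.ofReal α := iSup_le fun n => hBa _ (hv n)
end

section
/- Let (Ω, 𝔽, P) be a probability space, ν > 0, and T : Ω → ℝ a random variable whose law has density f_ν, the Student t density with ν degrees of freedom. Define π(t) := P(f_ν(T) < f_ν(t)). Let h : Ω → ℝ be any measurable function with |h(ω)| ≤ |T(ω)| for P-almost every ω. Then for every α ∈ (0,1), P(π(h) ≤ α) ≤ α. -/
open MeasureTheory ProbabilityTheory

/-- The Student t density with `ν` degrees of freedom. -/
noncomputable def studentTPdf (ν : ℝ) (x : ℝ) : ℝ :=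
  Real.Gamma ((ν + 1) / 2) / (Real.sqrt (ν * Real.pi) * Real.Gamma (ν / 2)) *
    (1 + x ^ 2 / ν) ^ (-((ν + 1) / 2))

lemma studentT_C_pos {ν : ℝ} (hν : 0 < ν) :
    0 < Real.Gamma ((ν + 1) / 2) / (Real.sqrt (ν * Real.pi) * Real.Gamma (ν / 2)) := by
  apply div_pos (Real.Gamma_pos_of_pos (by linarith))
  exact mul_pos (Real.sqrt_pos.2 (mul_pos hν Real.pi_pos)) (Real.Gamma_pos_of_pos (by linarith))

lemma studentT_anti {ν : ℝ} (hν : 0 < ν) {a b : ℝ} (hab : |a| ≤ |b|) :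
    studentTPdf ν b ≤ studentTPdf ν a := by
  unfold studentTPdf
  apply mul_le_mul_of_nonneg_left _ (studentT_C_pos hν).le
  have ha : (0:ℝ) < 1 + a ^ 2 / ν := by positivity
  have hb : (0:ℝ) < 1 + b ^ 2 / ν := by positivity
  have hsq : a ^ 2 ≤ b ^ 2 := by
    have := sq_abs a; have := sq_abs b
    nlinarith [abs_nonneg a, abs_nonneg b]
  have hle : 1 + a ^ 2 / ν ≤ 1 + b ^ 2 / ν := by gcongr
  rw [Real.rpow_neg ha.le, Real.rpow_neg hb.le]
  apply inv_anti₀ (Real.rpow_pos_of_pos ha _)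
  exact Real.rpow_le_rpow ha.le hle (by linarith)

lemma studentT_sq_eq {ν : ℝ} (hν : 0 < ν) {a b : ℝ}
    (hfeq : studentTPdf ν a = studentTPdf ν b) : a ^ 2 = b ^ 2 := by
  unfold studentTPdf at hfeq
  have hC := studentT_C_pos hν
  have ha : (0:ℝ) < 1 + a ^ 2 / ν := by positivity
  have hb : (0:ℝ) < 1 + b ^ 2 / ν := by positivity
  have h1 : (1 + a ^ 2 / ν) ^ (-((ν + 1) / 2)) = (1 + b ^ 2 / ν) ^ (-((ν + 1) / 2)) := by
    exact mul_left_cancel₀ hC.ne' hfeq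
  have h2 : (1 + a ^ 2 / ν) = (1 + b ^ 2 / ν) := by
    have hne : -((ν + 1) / 2) ≠ 0 := by intro hcon; nlinarith [hcon]
    have := congrArg (fun x : ℝ => x ^ (-((ν + 1) / 2))⁻¹) h1
    rwa [Real.rpow_rpow_inv ha.le hne, Real.rpow_rpow_inv hb.le hne] at this
  have : a ^ 2 / ν = b ^ 2 / ν := by linarith
  field_simp at this; exact this

lemma studentT_measurable (ν : ℝ) : Measurable (studentTPdf ν) := by
  unfold studentTPdf; fun_prop

lemma studentT_atom_zero {Ω : Type*} [MeasurableSpace Ω] (P : Measure Ω)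
    {ν : ℝ} (hν : 0 < ν) {T : Ω → ℝ} (hT : Measurable T)
    (hlaw : Measure.map T P = volume.withDensity (fun x => ENNReal.ofReal (studentTPdf ν x)))
    (c : ℝ) : P {ω | studentTPdf ν (T ω) = c} = 0 := by
  have hms : MeasurableSet {x : ℝ | studentTPdf ν x = c} :=
    (studentT_measurable ν) (measurableSet_singleton c)
  have hmap : P {ω | studentTPdf ν (T ω) = c}
      = (Measure.map T P) {x | studentTPdf ν x = c} := by
    rw [Measure.map_apply hT hms]; rfl
  rw [hmap, hlaw]
  apply withDensity_absolutelyContinuous volume _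
  rcases Set.eq_empty_or_nonempty {x : ℝ | studentTPdf ν x = c} with he | ⟨x₀, hx₀⟩
  · simp [he]
  · have hsub : {x : ℝ | studentTPdf ν x = c} ⊆ ({x₀, -x₀} : Set ℝ) := by
      intro x hx
      have hsq : x ^ 2 = x₀ ^ 2 := studentT_sq_eq hν (by rw [Set.mem_setOf_eq] at hx hx₀; rw [hx, hx₀])
      have hfac : (x - x₀) * (x + x₀) = 0 := by nlinarith
      rcases mul_eq_zero.1 hfac with h' | h'
      · left; linarith
      · right; simp only [Set.mem_singleton_iff]; linarith
    exact measure_mono_null hsub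
      (((Set.finite_singleton (-x₀)).insert x₀).measure_zero _)

/-- Validity of the generalized IM contour: if `T` has the Student t distribution
with `ν` degrees of freedom, `π(t) := P(f_ν(T) < f_ν(t))`, and `h` is measurable
with `|h| ≤ |T|` a.e., then `P(π(h) ≤ α) ≤ α` for all `α ∈ (0,1)`. -/
theorem stmt7 {Ω : Type*} [MeasurableSpace Ω]
    (P : Measure Ω) [IsProbabilityMeasure P] (ν : ℝ) (hν : 0 < ν)
    (T : Ω → ℝ) (hT : Measurable T)
    (hlaw : Measure.map T P = volume.withDensity (fun x => ENNReal.ofReal (studentTPdf ν x)))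
    (π : ℝ → ℝ)
    (hπ : ∀ t, π t = (P {ω | studentTPdf ν (T ω) < studentTPdf ν t}).toReal)
    (h : Ω → ℝ) (hh : Measurable h) (hdom : ∀ᵐ ω ∂P, |h ω| ≤ |T ω|) :
    ∀ α : ℝ, α ∈ Set.Ioo (0 : ℝ) 1 →
      P {ω | π (h ω) ≤ α} ≤ ENNReal.ofReal α := by
  intro α hα
  set Y : Ω → ℝ := fun ω => studentTPdf ν (T ω) with hYdef
  set G : ℝ → ENNReal := fun y => P {ω | Y ω < y} with hGdef
  have hGfin : ∀ y, G y ≠ ⊤ := fun y => measure_ne_top _ _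
  have hGmono : Monotone G := fun y₁ y₂ h12 =>
    measure_mono (fun ω hω => lt_of_lt_of_le hω h12)
  -- Step 1: reduce to the event expressed in terms of Y = f ∘ T.
  have hstep : {ω | π (h ω) ≤ α} ≤ᵐ[P] {ω | (G (Y ω)).toReal ≤ α} := by
    filter_upwards [hdom] with ω hω hle
    replace hle : π (h ω) ≤ α := hle
    show (G (Y ω)).toReal ≤ α
    have h1 : Y ω ≤ studentTPdf ν (h ω) := studentT_anti hν hω
    have h2 : G (Y ω) ≤ G (studentTPdf ν (h ω)) := hGmono h1
    have h3 := ENNReal.toReal_mono (hGfin _) h2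
    rw [hπ] at hle
    exact le_trans h3 hle
  refine le_trans (measure_mono_ae hstep) ?_
  have hatom : ∀ c : ℝ, P {ω | Y ω = c} = 0 := studentT_atom_zero P hν hT hlaw
  set A : Set ℝ := {y | (G y).toReal ≤ α} with hAdef
  have hlower : ∀ ⦃y₁ y₂ : ℝ⦄, y₁ ≤ y₂ → y₂ ∈ A → y₁ ∈ A := fun y₁ y₂ h12 h2 =>
    le_trans (ENNReal.toReal_mono (hGfin _) (hGmono h12)) h2
  have hGA : ∀ y ∈ A, G y ≤ ENNReal.ofReal α := fun y hy =>
    (ENNReal.le_ofReal_iff_toReal_le (hGfin y) hα.1.le).2 hy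
  -- A is bounded above
  have hbdd : ∃ n : ℕ, (n:ℝ) ∉ A := by
    by_contra hcon
    push_neg at hcon
    have hmono : Monotone (fun n : ℕ => {ω | Y ω < (n:ℝ)}) := by
      intro m n hmn ω hω
      simp only [Set.mem_setOf_eq] at hω ⊢
      exact lt_of_lt_of_le hω (by exact_mod_cast hmn)
    have hsup : (⨆ n : ℕ, G (n:ℝ)) = 1 := by
      rw [hGdef]
      rw [← Directed.measure_iUnion hmono.directed_le]
      have hun : (⋃ n : ℕ, {ω | Y ω < (n:ℝ)}) = Set.univ := by
        ext ω
        simp only [Set.mem_iUnion, Set.mem_univ, iff_true, Set.mem_setOf_eq]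
        exact exists_nat_gt (Y ω)
      rw [hun, measure_univ]
    have : (1 : ENNReal) ≤ ENNReal.ofReal α := by
      rw [← hsup]; exact iSup_le fun n => hGA _ (hcon n)
    exact absurd (lt_of_le_of_lt this (ENNReal.ofReal_lt_one.2 hα.2)) (lt_irrefl _)
  rcases Set.eq_empty_or_nonempty A with hAe | hAne
  · have : {ω | (G (Y ω)).toReal ≤ α} = (∅ : Set Ω) := by
      ext ω
      simp only [Set.mem_setOf_eq, Set.mem_empty_iff_false, iff_false]
      intro hcon
      exact absurd (show Y ω ∈ A from hcon) (by rw [hAe]; exact Set.notMem_empty _)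
    rw [this, measure_empty]
    exact zero_le
  obtain ⟨n, hn⟩ := hbdd
  have hAbdd : BddAbove A := by
    refine ⟨n, fun y hy => ?_⟩
    by_contra hyn
    exact hn (hlower (le_of_not_ge hyn) hy)
  set c := sSup A with hc
  by_cases hcA : c ∈ A
  · -- A ⊆ Iic c, and P(Y ≤ c) = G c ≤ α by no atoms
    have h1 : {ω | (G (Y ω)).toReal ≤ α} ⊆ {ω | Y ω < c} ∪ {ω | Y ω = c} := by
      intro ω hω
      rcases lt_or_eq_of_le (le_csSup hAbdd (show Y ω ∈ A from hω)) with h' | h'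
      · exact Or.inl h'
      · exact Or.inr h'
    calc P {ω | (G (Y ω)).toReal ≤ α}
        ≤ P {ω | Y ω < c} + P {ω | Y ω = c} := le_trans (measure_mono h1) (measure_union_le _ _)
      _ = G c := by rw [hatom c, add_zero]
      _ ≤ ENNReal.ofReal α := hGA c hcA
  · -- A = Iio c
    have hIio : ∀ y < c, y ∈ A := by
      intro y hy
      obtain ⟨a, haA, hya⟩ := exists_lt_of_lt_csSup hAne hy
      exact hlower hya.le haA
    have h1 : {ω | (G (Y ω)).toReal ≤ α} ⊆ {ω | Y ω < c} := by
      intro ω hω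
      rcases lt_or_eq_of_le (le_csSup hAbdd (show Y ω ∈ A from hω)) with h' | h'
      · exact h'
      · exact absurd (show c ∈ A by rw [hc, ← h']; exact hω) hcA
    have h2 : {ω | Y ω < c} = ⋃ n : ℕ, {ω | Y ω < c - 1 / (n + 1)} := by
      ext ω
      simp only [Set.mem_setOf_eq, Set.mem_iUnion]
      constructor
      · intro hω
        obtain ⟨m, hm⟩ := exists_nat_one_div_lt (sub_pos.2 hω)
        exact ⟨m, by linarith⟩
      · rintro ⟨m, hm⟩
        have : (0:ℝ) < 1 / (m + 1) := by positivity
        linarith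
    have hmono : Monotone (fun n : ℕ => {ω | Y ω < c - 1 / ((n:ℝ) + 1)}) := by
      intro m k hmk ω hω
      have hmk' : (m:ℝ) ≤ k := Nat.cast_le.2 hmk
      have hk : (1:ℝ) / (k + 1) ≤ 1 / (m + 1) := by
        apply one_div_le_one_div_of_le (by positivity)
        linarith
      simp only [Set.mem_setOf_eq] at hω ⊢
      linarith
    calc P {ω | (G (Y ω)).toReal ≤ α}
        ≤ P {ω | Y ω < c} := measure_mono h1
      _ = ⨆ m : ℕ, P {ω | Y ω < c - 1 / (m + 1)} := by
          rw [h2, Directed.measure_iUnion hmono.directed_le]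
      _ ≤ ENNReal.ofReal α := by
          refine iSup_le fun m => hGA _ (hIio _ ?_)
          have : (0:ℝ) < 1 / ((m:ℝ) + 1) := by positivity
          linarith
end
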